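/- arXiv:2202.00405 — 2 statements merged into one kernel-verified Lean document; each statement's English description precedes it below -/
import Mathlib

section
/- Let K be a field of characteristic different from 2, let n ≥ 1, and let c ∈ GL_n(K) be a GL_n-odd involution, i.e. c² = 1 and |n⁺(c) − n⁻(c)| ≤ 1 where n⁺(c) = dim_K ker(c − I) and n⁻(c) = n − n⁺(c). Then the dimension of the fixed space {X ∈ Mat_n(K) : cX = Xc and tr(X) = 0} of Ad(c) acting on the trace-zero matrices is at most n(n+1)/2 − 1 (the dimension of a Borel subalgebra of sl_n); in other words, every GL_n-odd involution is t-odd. -/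
/-- The fixed space of `Ad(c)` acting on `sl_n`: the subspace of trace-zero
`n × n` matrices commuting with `c`. -/
def slCommutant {K : Type*} [Field K] {n : ℕ} (c : Matrix (Fin n) (Fin n) K) :
    Submodule K (Matrix (Fin n) (Fin n) K) where
  carrier := {X | c * X = X * c ∧ X.trace = 0}
  add_mem' := by
    intro X Y hX hY
    simp only [Set.mem_setOf_eq] at *
    constructor
    · rw [Matrix.mul_add, Matrix.add_mul, hX.1, hY.1]
    · rw [Matrix.trace_add, hX.2, hY.2, add_zero]
  zero_mem' := by simp
  smul_mem' := by
    intro t X hX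
    simp only [Set.mem_setOf_eq] at *
    constructor
    · rw [Matrix.mul_smul, Matrix.smul_mul, hX.1]
    · rw [Matrix.trace_smul, hX.2, smul_zero]


open Matrix

section Aux

variable {K : Type*} [Field K] {n : ℕ}

/-- The full commutant of `c` in `Mat_n`. -/
def matCommutant (c : Matrix (Fin n) (Fin n) K) :
    Submodule K (Matrix (Fin n) (Fin n) K) where
  carrier := {X | c * X = X * c}
  add_mem' := by
    intro X Y hX hY
    simp only [Set.mem_setOf_eq] at *
    rw [Matrix.mul_add, Matrix.add_mul, hX, hY]
  zero_mem' := by simp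
  smul_mem' := by
    intro t X hX
    simp only [Set.mem_setOf_eq] at *
    rw [Matrix.mul_smul, Matrix.smul_mul, hX]

lemma mem_ker_sub_one_iff (c : Matrix (Fin n) (Fin n) K) (x : Fin n → K) :
    x ∈ LinearMap.ker (c - 1).mulVecLin ↔ c *ᵥ x = x := by
  rw [LinearMap.mem_ker, Matrix.mulVecLin_apply, Matrix.sub_mulVec, Matrix.one_mulVec,
    sub_eq_zero]

lemma mem_ker_add_one_iff (c : Matrix (Fin n) (Fin n) K) (x : Fin n → K) :
    x ∈ LinearMap.ker (c + 1).mulVecLin ↔ c *ᵥ x = -x := by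
  rw [LinearMap.mem_ker, Matrix.mulVecLin_apply, Matrix.add_mulVec, Matrix.one_mulVec,
    add_eq_zero_iff_eq_neg]

lemma isCompl_ker (hK : ringChar K ≠ 2) (c : Matrix (Fin n) (Fin n) K) (hc : c * c = 1) :
    IsCompl (LinearMap.ker (c - 1).mulVecLin) (LinearMap.ker (c + 1).mulVecLin) := by
  have h2 : (2 : K) ≠ 0 := Ring.two_ne_zero hK
  constructor
  · rw [Submodule.disjoint_def]
    intro x hx hx'
    rw [mem_ker_sub_one_iff] at hx
    rw [mem_ker_add_one_iff] at hx'
    have : (2 : K) • x = 0 := by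
      have hxx := hx.symm.trans hx'
      funext i
      have h := congrFun hxx i
      simp only [Pi.neg_apply] at h
      simp only [Pi.smul_apply, smul_eq_mul, Pi.zero_apply]
      linear_combination h
    have := smul_eq_zero.mp this
    tauto
  · rw [codisjoint_iff, eq_top_iff]
    intro x _
    have hx : x = (2 : K)⁻¹ • (x + c *ᵥ x) + (2 : K)⁻¹ • (x - c *ᵥ x) := by
      rw [← smul_add]
      have : x + c *ᵥ x + (x - c *ᵥ x) = (2 : K) • x := by
        funext i; simp [Pi.smul_apply, two_smul]; ring
      rw [this, smul_smul, inv_mul_cancel₀ h2, one_smul]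
    rw [hx]
    apply Submodule.add_mem
    · apply Submodule.smul_mem
      apply Submodule.mem_sup_left
      rw [mem_ker_sub_one_iff, Matrix.mulVec_add, Matrix.mulVec_mulVec, hc,
        Matrix.one_mulVec, add_comm]
    · apply Submodule.smul_mem
      apply Submodule.mem_sup_right
      rw [mem_ker_add_one_iff, Matrix.mulVec_sub, Matrix.mulVec_mulVec, hc,
        Matrix.one_mulVec, neg_sub]

lemma mul_vecMulVec (c : Matrix (Fin n) (Fin n) K) (v w : Fin n → K) :
    c * Matrix.vecMulVec v w = Matrix.vecMulVec (c *ᵥ v) w := by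
  ext i j
  simp [Matrix.mul_apply, Matrix.vecMulVec_apply, Matrix.mulVec, dotProduct,
    Finset.sum_mul, mul_assoc]

lemma vecMulVec_mul (c : Matrix (Fin n) (Fin n) K) (v w : Fin n → K) :
    Matrix.vecMulVec v w * c = Matrix.vecMulVec v (w ᵥ* c) := by
  ext i j
  simp [Matrix.mul_apply, Matrix.vecMulVec_apply, Matrix.vecMul, dotProduct,
    Finset.mul_sum, mul_assoc]

lemma vecMulVec_smul_left (t : K) (v w : Fin n → K) :
    Matrix.vecMulVec (t • v) w = t • Matrix.vecMulVec v w := by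
  ext i j; simp [Matrix.vecMulVec_apply, mul_assoc]

lemma vecMulVec_smul_right (t : K) (v w : Fin n → K) :
    Matrix.vecMulVec v (t • w) = t • Matrix.vecMulVec v w := by
  ext i j; simp [Matrix.vecMulVec_apply, mul_left_comm]

lemma trace_vecMulVec' (v w : Fin n → K) :
    (Matrix.vecMulVec v w).trace = v ⬝ᵥ w := by
  simp [Matrix.trace, Matrix.diag, Matrix.vecMulVec_apply, dotProduct]

/-- There is an element of the commutant of an involution with nonzero trace. -/
lemma exists_commutant_trace_ne_zero (hK : ringChar K ≠ 2) (hn : 1 ≤ n)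
    (c : Matrix (Fin n) (Fin n) K) (hc : c * c = 1) :
    ∃ E : Matrix (Fin n) (Fin n) K, c * E = E * c ∧ E.trace ≠ 0 := by
  have h2 : (2 : K) ≠ 0 := Ring.two_ne_zero hK
  -- find an eigenvector
  obtain ⟨v, ε, hv, hε, hcv⟩ :
      ∃ (v : Fin n → K) (ε : K), v ≠ 0 ∧ (ε = 1 ∨ ε = -1) ∧ c *ᵥ v = ε • v := by
    set x : Fin n → K := Pi.single ⟨0, hn⟩ 1 with hx
    have hx0 : x ≠ 0 := by
      intro h
      have := congrFun h ⟨0, hn⟩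
      simp [hx] at this
    by_cases h : x + c *ᵥ x = 0
    · refine ⟨x, -1, hx0, Or.inr rfl, ?_⟩
      have hcx : c *ᵥ x = -x := by
        funext i
        have h' := congrFun h i
        simp only [Pi.add_apply, Pi.neg_apply, Pi.zero_apply] at h' ⊢
        linear_combination h'
      rw [hcx]
      exact (neg_one_smul K x).symm
    · refine ⟨x + c *ᵥ x, 1, h, Or.inl rfl, ?_⟩
      rw [Matrix.mulVec_add, Matrix.mulVec_mulVec, hc, Matrix.one_mulVec, one_smul, add_comm]
  have hε2 : ε * ε = 1 := by rcases hε with h | h <;> simp [h]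
  have hεne : ε ≠ 0 := by rcases hε with h | h <;> simp [h]
  obtain ⟨i, hi⟩ : ∃ i, v i ≠ 0 := by
    by_contra h
    push_neg at h
    exact hv (funext fun i => h i)
  set w0 : Fin n → K := Pi.single i 1 with hw0
  set w : Fin n → K := w0 ᵥ* c + ε • w0 with hw
  have hwc : w ᵥ* c = ε • w := by
    rw [hw, Matrix.add_vecMul, Matrix.vecMul_vecMul, hc, Matrix.vecMul_one,
      Matrix.smul_vecMul, smul_add, smul_smul, hε2, one_smul, add_comm]
  refine ⟨Matrix.vecMulVec v w, ?_, ?_⟩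
  · rw [_root_.mul_vecMulVec, _root_.vecMulVec_mul, hcv, hwc, vecMulVec_smul_left, vecMulVec_smul_right]
  · rw [trace_vecMulVec']
    have h1 : v ⬝ᵥ w = ε * (2 * v i) := by
      rw [hw, dotProduct_add]
      have hA : v ⬝ᵥ (w0 ᵥ* c) = ε * v i := by
        rw [dotProduct_comm, ← Matrix.dotProduct_mulVec, hcv]
        simp [hw0, single_dotProduct, dotProduct_smul]
      have hB : v ⬝ᵥ (ε • w0) = ε * v i := by
        simp [hw0, dotProduct_smul, dotProduct_single, smul_eq_mul]
      rw [hA, hB]; ring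
    rw [h1]
    exact mul_ne_zero hεne (mul_ne_zero h2 hi)

/-- An element of the commutant preserves the `+1`-eigenspace. -/
lemma commutant_maps_plus (c : Matrix (Fin n) (Fin n) K) (X : Matrix (Fin n) (Fin n) K)
    (hX : c * X = X * c) :
    ∀ x ∈ LinearMap.ker (c - 1).mulVecLin,
      X.mulVecLin x ∈ LinearMap.ker (c - 1).mulVecLin := by
  intro x hx
  rw [mem_ker_sub_one_iff] at hx ⊢
  rw [Matrix.mulVecLin_apply, Matrix.mulVec_mulVec, hX, ← Matrix.mulVec_mulVec, hx]

lemma commutant_maps_minus (c : Matrix (Fin n) (Fin n) K) (X : Matrix (Fin n) (Fin n) K)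
    (hX : c * X = X * c) :
    ∀ x ∈ LinearMap.ker (c + 1).mulVecLin,
      X.mulVecLin x ∈ LinearMap.ker (c + 1).mulVecLin := by
  intro x hx
  rw [mem_ker_add_one_iff] at hx ⊢
  rw [Matrix.mulVecLin_apply, Matrix.mulVec_mulVec, hX, ← Matrix.mulVec_mulVec, hx,
    Matrix.mulVec_neg]

set_option maxHeartbeats 1000000 in
set_option synthInstance.maxHeartbeats 1000000 in
lemma finrank_matCommutant_le (hK : ringChar K ≠ 2) (c : Matrix (Fin n) (Fin n) K)
    (hc : c * c = 1) :
    Module.finrank K (matCommutant c) ≤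
      Module.finrank K (LinearMap.ker (c - 1).mulVecLin) ^ 2 +
      Module.finrank K (LinearMap.ker (c + 1).mulVecLin) ^ 2 := by
  set Vp := LinearMap.ker (c - 1).mulVecLin with hVp
  set Vm := LinearMap.ker (c + 1).mulVecLin with hVm
  have hcompl : IsCompl Vp Vm := isCompl_ker hK c hc
  set prP : (Fin n → K) →ₗ[K] Vp := Vp.projectionOnto Vm hcompl with hprP
  set prM : (Fin n → K) →ₗ[K] Vm := Vm.projectionOnto Vp hcompl.symm with hprM
  let Φ : matCommutant c →ₗ[K] ((Vp →ₗ[K] Vp) × (Vm →ₗ[K] Vm)) :=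
    { toFun := fun X =>
        (prP ∘ₗ Matrix.mulVecLin (X : Matrix (Fin n) (Fin n) K) ∘ₗ Vp.subtype,
         prM ∘ₗ Matrix.mulVecLin (X : Matrix (Fin n) (Fin n) K) ∘ₗ Vm.subtype)
      map_add' := by
        intro X Y
        refine Prod.ext (LinearMap.ext fun x => ?_) (LinearMap.ext fun x => ?_) <;>
          simp only [LinearMap.comp_apply, Submodule.coe_add, Matrix.mulVecLin_apply,
            Matrix.add_mulVec, Prod.fst_add, Prod.snd_add, LinearMap.add_apply,
            Submodule.subtype_apply, map_add]
      map_smul' := by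
        intro t X
        refine Prod.ext (LinearMap.ext fun x => ?_) (LinearMap.ext fun x => ?_) <;>
        · simp only [LinearMap.comp_apply, Submodule.coe_smul, Matrix.mulVecLin_apply,
            Matrix.smul_mulVec, Prod.smul_fst, Prod.smul_snd, LinearMap.smul_apply,
            Submodule.subtype_apply, RingHom.id_apply]
          rw [LinearMap.map_smul] }
  have hker : LinearMap.ker Φ = ⊥ := by
    rw [eq_bot_iff]
    intro X hX
    rw [LinearMap.mem_ker] at hX
    have h1 : ∀ x ∈ Vp, (X : Matrix (Fin n) (Fin n) K) *ᵥ x = 0 := by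
      intro x hx
      have hfst := congrArg Prod.fst hX
      have h0 := LinearMap.congr_fun hfst ⟨x, hx⟩
      have hmem : (X : Matrix (Fin n) (Fin n) K) *ᵥ x ∈ Vp := by
        have := commutant_maps_plus c (X : Matrix (Fin n) (Fin n) K) X.2 x hx
        rwa [Matrix.mulVecLin_apply] at this
      have : prP ((X : Matrix (Fin n) (Fin n) K) *ᵥ x) = 0 := h0
      rw [hprP] at this
      have heq := Submodule.linearProjOfIsCompl_apply_left hcompl
        ⟨(X : Matrix (Fin n) (Fin n) K) *ᵥ x, hmem⟩
      rw [show ((⟨(X : Matrix (Fin n) (Fin n) K) *ᵥ x, hmem⟩ : Vp) : Fin n → K)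
        = (X : Matrix (Fin n) (Fin n) K) *ᵥ x from rfl] at heq
      rw [heq] at this
      exact congrArg Subtype.val this
    have h2 : ∀ x ∈ Vm, (X : Matrix (Fin n) (Fin n) K) *ᵥ x = 0 := by
      intro x hx
      have hsnd := congrArg Prod.snd hX
      have h0 := LinearMap.congr_fun hsnd ⟨x, hx⟩
      have hmem : (X : Matrix (Fin n) (Fin n) K) *ᵥ x ∈ Vm := by
        have := commutant_maps_minus c (X : Matrix (Fin n) (Fin n) K) X.2 x hx
        rwa [Matrix.mulVecLin_apply] at this
      have : prM ((X : Matrix (Fin n) (Fin n) K) *ᵥ x) = 0 := h0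
      rw [hprM] at this
      have heq := Submodule.linearProjOfIsCompl_apply_left hcompl.symm
        ⟨(X : Matrix (Fin n) (Fin n) K) *ᵥ x, hmem⟩
      rw [show ((⟨(X : Matrix (Fin n) (Fin n) K) *ᵥ x, hmem⟩ : Vm) : Fin n → K)
        = (X : Matrix (Fin n) (Fin n) K) *ᵥ x from rfl] at heq
      rw [heq] at this
      exact congrArg Subtype.val this
    have hsup : Vp ⊔ Vm = ⊤ := hcompl.sup_eq_top
    have hall : ∀ x : Fin n → K, (X : Matrix (Fin n) (Fin n) K) *ᵥ x = 0 := by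
      intro x
      have hx : x ∈ Vp ⊔ Vm := by rw [hsup]; trivial
      obtain ⟨y, hy, z, hz, rfl⟩ := Submodule.mem_sup.mp hx
      rw [Matrix.mulVec_add, h1 y hy, h2 z hz, add_zero]
    have hX0 : (X : Matrix (Fin n) (Fin n) K) = 0 := by
      apply Matrix.ext
      intro k j
      have := congrFun (hall (Pi.single j 1)) k
      simpa [Matrix.mulVec_single] using this
    simpa [Submodule.mem_bot] using Subtype.ext hX0
  have hΦ : Function.Injective Φ := fun X Y hXY => by
    have hmem : X - Y ∈ LinearMap.ker Φ := by rw [LinearMap.mem_ker, map_sub, hXY]; exact sub_self (Φ Y)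
    rw [hker, Submodule.mem_bot, sub_eq_zero] at hmem
    exact hmem
  haveI : Module.Finite K (Vp →ₗ[K] Vp) := inferInstance
  haveI : Module.Finite K (Vm →ₗ[K] Vm) := inferInstance
  haveI : Module.Free K (Vp →ₗ[K] Vp) := Module.Free.linearMap _ _ _ _
  haveI : Module.Free K (Vm →ₗ[K] Vm) := Module.Free.linearMap _ _ _ _
  haveI : Module.Finite K ((Vp →ₗ[K] Vp) × (Vm →ₗ[K] Vm)) := Module.Finite.prod
  calc Module.finrank K (matCommutant c)
      ≤ Module.finrank K ((Vp →ₗ[K] Vp) × (Vm →ₗ[K] Vm)) :=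
        LinearMap.finrank_le_finrank_of_injective hΦ
    _ = Module.finrank K Vp ^ 2 + Module.finrank K Vm ^ 2 := by
        rw [Module.finrank_prod, Module.finrank_linearMap, Module.finrank_linearMap, sq, sq]

end Aux

/-- Every `GL_n`-odd involution is t-odd: for an involution `c ∈ GL_n(K)` with
`|n⁺(c) - n⁻(c)| ≤ 1`, the fixed space of `Ad(c)` on `sl_n` has dimension at most
`n(n+1)/2 - 1`, the dimension of a Borel subalgebra of `sl_n`. -/
theorem stmt3 {K : Type*} [Field K] (hK : ringChar K ≠ 2) {n : ℕ} (hn : 1 ≤ n)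
    (c : Matrix (Fin n) (Fin n) K) (hc : c * c = 1)
    (a b : ℕ)
    (ha : a = Module.finrank K (LinearMap.ker (c - 1).mulVecLin))
    (hb : b = n - a)
    (hodd : |(a : ℤ) - (b : ℤ)| ≤ 1) :
    Module.finrank K (slCommutant c) ≤ n * (n + 1) / 2 - 1 := by
  set Vp := LinearMap.ker (c - 1).mulVecLin
  set Vm := LinearMap.ker (c + 1).mulVecLin
  have hcompl := isCompl_ker hK c hc
  have hsum : Module.finrank K Vp + Module.finrank K Vm = n := by
    rw [Submodule.finrank_add_eq_of_isCompl hcompl, Module.finrank_fin_fun]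
  have haV : Module.finrank K Vp = a := ha.symm
  have hbV : Module.finrank K Vm = b := by omega
  -- strict inclusion of slCommutant in matCommutant
  have hlt : slCommutant c < matCommutant c := by
    obtain ⟨E, hE1, hE2⟩ := exists_commutant_trace_ne_zero hK hn c hc
    refine lt_of_le_of_ne (fun X hX => hX.1) ?_
    intro h
    have hEmem : E ∈ matCommutant c := hE1
    rw [← h] at hEmem
    exact hE2 hEmem.2
  have h1 : Module.finrank K (slCommutant c) < Module.finrank K (matCommutant c) :=
    Submodule.finrank_lt_finrank_of_lt hlt
  have h2 := finrank_matCommutant_le hK c hc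
  rw [haV, hbV] at h2
  -- arithmetic
  have hab : a + b = n := by
    have : a ≤ n := by
      rw [ha]
      have h := Submodule.finrank_le
        (LinearMap.ker (c - 1).mulVecLin : Submodule K (Fin n → K))
      simpa [Module.finrank_fin_fun] using h
    omega
  have harith : a ^ 2 + b ^ 2 ≤ n * (n + 1) / 2 := by
    rw [Nat.le_div_iff_mul_le (by norm_num)]
    have hd : ((a : ℤ) - b) ^ 2 ≤ 1 := by
      have := abs_le.mp hodd
      nlinarith
    have : ((a : ℤ) ^ 2 + b ^ 2) * 2 ≤ n * (n + 1) := by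
      have hn' : (1 : ℤ) ≤ n := by exact_mod_cast hn
      have habz : (a : ℤ) + b = n := by exact_mod_cast hab
      nlinarith
    exact_mod_cast this
  omega
end

section
/- Let F be a number field, let K be a field of characteristic different from 2, let n ≥ 1, and suppose that to each real place v of F is assigned a GL_n-odd involution c_v ∈ GL_n(K), i.e. c_v² = 1 and |n⁺(c_v) − n⁻(c_v)| ≤ 1 where n⁺(c_v) = dim_K ker(c_v − I) and n⁻(c_v) = n − n⁺(c_v). Then the sum over the real places v of F of dim_K {X ∈ Mat_n(K) : c_v X = X c_v and tr(X) = 0}, plus (n² − 1) times the number of complex places of F, is at most [F:ℚ] · (n(n+1)/2 − 1). -/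
open NumberField

lemma arith_bound {n a : ℕ} (h2 : 2 ≤ n) (hle : a ≤ n)
    (hodd : |(a : ℤ) - ((n - a : ℕ) : ℤ)| ≤ 1) :
    a ^ 2 + (n - a) ^ 2 ≤ n * (n + 1) / 2 - 1 := by
  set b := n - a with hb
  have hab : a + b = n := by omega
  have hcast : ((b : ℕ) : ℤ) = (n : ℤ) - a := by omega
  rw [abs_le] at hodd
  have heven : 2 ∣ n * (n + 1) := (Nat.even_mul_succ_self n).two_dvd
  have hs : 2 * (n * (n + 1) / 2) = n * (n + 1) := Nat.mul_div_cancel' heven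
  have key : 2 * (a ^ 2 + b ^ 2) + 2 ≤ n * (n + 1) := by
    have hcases : (a : ℤ) - b = -1 ∨ (a : ℤ) - b = 0 ∨ (a : ℤ) - b = 1 := by omega
    zify
    have habz : (a : ℤ) + b = n := by omega
    rcases hcases with h | h | h
    · have hn3 : (3 : ℤ) ≤ n := by omega
      nlinarith
    · have ha1 : (1 : ℤ) ≤ a := by omega
      nlinarith
    · have hn3 : (3 : ℤ) ≤ n := by omega
      nlinarith
  set p := a ^ 2 + b ^ 2
  set s := n * (n + 1) / 2
  omega

lemma two_ne_zero_of_ringChar {K : Type*} [Field K] (hK : ringChar K ≠ 2) : (2 : K) ≠ 0 := by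
  intro h
  have hd : ringChar K ∣ 2 := ringChar.dvd (by exact_mod_cast h)
  rcases (Nat.dvd_prime Nat.prime_two).mp hd with h1 | h2
  · exact CharP.ringChar_ne_one h1
  · exact hK h2

set_option maxHeartbeats 1000000 in
set_option synthInstance.maxHeartbeats 400000 in
lemma slCommutant_bound {K : Type*} [Field K] (hK : ringChar K ≠ 2) {n : ℕ}
    (c : Matrix (Fin n) (Fin n) K) (hc : c * c = 1) :
    Module.finrank K (slCommutant c)
      ≤ (Module.finrank K (LinearMap.ker (c - 1).mulVecLin)) ^ 2
        + (n - Module.finrank K (LinearMap.ker (c - 1).mulVecLin)) ^ 2 := by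
  have two_ne : (2 : K) ≠ 0 := two_ne_zero_of_ringChar hK
  set Vp := LinearMap.ker (c - 1).mulVecLin with hVp
  set Vm := LinearMap.ker (c + 1).mulVecLin with hVm
  have memp : ∀ x, x ∈ Vp ↔ c.mulVec x = x := by
    intro x
    simp [hVp, LinearMap.mem_ker, Matrix.mulVecLin_apply, Matrix.sub_mulVec,
      Matrix.one_mulVec, sub_eq_zero]
  have memm : ∀ x, x ∈ Vm ↔ c.mulVec x = -x := by
    intro x
    simp [hVm, LinearMap.mem_ker, Matrix.mulVecLin_apply, Matrix.add_mulVec,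
      Matrix.one_mulVec, add_eq_zero_iff_eq_neg]
  have hinf : Vp ⊓ Vm = ⊥ := by
    rw [Submodule.eq_bot_iff]
    rintro x ⟨hp, hm⟩
    have h1 := (memp x).mp hp
    have h2 := (memm x).mp hm
    have hx : x = -x := h1.symm.trans h2
    have hxx : (2 : K) • x = 0 := by
      rw [two_smul]
      nth_rewrite 2 [hx]
      exact add_neg_cancel x
    rcases smul_eq_zero.mp hxx with h | h
    · exact absurd h two_ne
    · exact h
  have hsup : Vp ⊔ Vm = ⊤ := by
    rw [Submodule.eq_top_iff']
    intro x
    have hx : x = (2⁻¹ : K) • (x + c.mulVec x) + (2⁻¹ : K) • (x - c.mulVec x) := by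
      have h2 : (2⁻¹ : K) + 2⁻¹ = 1 := by
        rw [← two_mul]
        exact mul_inv_cancel₀ two_ne
      rw [smul_add, smul_sub, add_add_sub_cancel, ← add_smul, h2, one_smul]
    rw [hx]
    apply Submodule.add_mem_sup
    · rw [memp]
      rw [Matrix.mulVec_smul, Matrix.mulVec_add, Matrix.mulVec_mulVec, hc, Matrix.one_mulVec]
      rw [add_comm]
    · rw [memm]
      rw [Matrix.mulVec_smul, Matrix.mulVec_sub, Matrix.mulVec_mulVec, hc, Matrix.one_mulVec]
      rw [← smul_neg, neg_sub]
  have hdim : Module.finrank K Vp + Module.finrank K Vm = n := by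
    have h := Submodule.finrank_sup_add_finrank_inf_eq Vp Vm
    rw [hsup, hinf, finrank_top, finrank_bot, add_zero] at h
    rw [← h]
    simp [Module.finrank_pi]
  -- maps preserve eigenspaces
  have hmapsp : ∀ X : slCommutant c, ∀ v ∈ Vp, (X : Matrix (Fin n) (Fin n) K).mulVecLin v ∈ Vp := by
    rintro ⟨X, hX, -⟩ v hv
    rw [memp] at hv ⊢
    simp only [Matrix.mulVecLin_apply]
    rw [Matrix.mulVec_mulVec, hX, ← Matrix.mulVec_mulVec, hv]
  have hmapsm : ∀ X : slCommutant c, ∀ v ∈ Vm, (X : Matrix (Fin n) (Fin n) K).mulVecLin v ∈ Vm := by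
    rintro ⟨X, hX, -⟩ v hv
    rw [memm] at hv ⊢
    simp only [Matrix.mulVecLin_apply]
    rw [Matrix.mulVec_mulVec, hX, ← Matrix.mulVec_mulVec, hv, Matrix.mulVec_neg]
  let Φ : slCommutant c →ₗ[K] (Vp →ₗ[K] Vp) × (Vm →ₗ[K] Vm) :=
    { toFun := fun X => ((X : Matrix (Fin n) (Fin n) K).mulVecLin.restrict (hmapsp X),
        (X : Matrix (Fin n) (Fin n) K).mulVecLin.restrict (hmapsm X))
      map_add' := by
        intro X Y
        refine Prod.ext ?_ ?_ <;>
        · refine LinearMap.ext fun v => Subtype.ext ?_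
          simp only [LinearMap.restrict_apply, Prod.fst_add, Prod.snd_add,
            LinearMap.add_apply, Submodule.coe_add, Matrix.mulVecLin_apply, Matrix.add_mulVec]
      map_smul' := by
        intro t X
        refine Prod.ext ?_ ?_ <;>
        · refine LinearMap.ext fun v => Subtype.ext ?_
          simp only [LinearMap.restrict_apply, Prod.smul_fst, Prod.smul_snd,
            LinearMap.smul_apply, Submodule.coe_smul, RingHom.id_apply, SetLike.val_smul,
            Matrix.mulVecLin_apply, Matrix.smul_mulVec] }
  have hΦinj : Function.Injective Φ := by
    intro P Q hPQ
    rw [← sub_eq_zero]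
    set X := P - Q with hXdef
    have hX : Φ X = 0 := by rw [hXdef, map_sub, hPQ]; exact sub_self (Φ Q)
    have h1 : ∀ v ∈ Vp, (X : Matrix (Fin n) (Fin n) K).mulVec v = 0 := by
      intro v hv
      have h := congrArg Prod.fst hX
      have h2 := congrArg Subtype.val (LinearMap.congr_fun h ⟨v, hv⟩)
      simpa only [Φ, LinearMap.coe_mk, AddHom.coe_mk, Prod.fst_zero, Prod.snd_zero,
        LinearMap.restrict_apply, Matrix.mulVecLin_apply, LinearMap.zero_apply,
        Submodule.coe_zero] using h2
    have h2 : ∀ v ∈ Vm, (X : Matrix (Fin n) (Fin n) K).mulVec v = 0 := by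
      intro v hv
      have h := congrArg Prod.snd hX
      have h2 := congrArg Subtype.val (LinearMap.congr_fun h ⟨v, hv⟩)
      simpa only [Φ, LinearMap.coe_mk, AddHom.coe_mk, Prod.fst_zero, Prod.snd_zero,
        LinearMap.restrict_apply, Matrix.mulVecLin_apply, LinearMap.zero_apply,
        Submodule.coe_zero] using h2
    have hall : ∀ v, (X : Matrix (Fin n) (Fin n) K).mulVec v = 0 := by
      intro v
      have hv : v ∈ Vp ⊔ Vm := hsup ▸ Submodule.mem_top
      rcases Submodule.mem_sup.mp hv with ⟨y, hy, z, hz, rfl⟩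
      rw [Matrix.mulVec_add, h1 y hy, h2 z hz, add_zero]
    have hX0 : (X : Matrix (Fin n) (Fin n) K) = 0 := by
      ext i j
      have := congrFun (hall (Pi.single j 1)) i
      simpa [Matrix.mulVec_single] using this
    exact Subtype.ext hX0
    -- end injectivity
  have hb : Module.finrank K Vm = n - Module.finrank K Vp := by omega
  haveI hf1 : Module.Finite K Vp := inferInstance
  haveI hf2 : Module.Finite K Vm := inferInstance
  haveI := Module.Free.linearMap K K Vp Vp
  haveI := Module.Free.linearMap K K Vm Vm
  haveI := Module.Finite.linearMap K K Vp Vp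
  haveI := Module.Finite.linearMap K K Vm Vm
  calc Module.finrank K (slCommutant c)
      ≤ Module.finrank K ((Vp →ₗ[K] Vp) × (Vm →ₗ[K] Vm)) :=
        LinearMap.finrank_le_finrank_of_injective hΦinj
    _ = Module.finrank K Vp ^ 2 + (n - Module.finrank K Vp) ^ 2 := by
        rw [Module.finrank_prod, Module.finrank_linearMap, Module.finrank_linearMap, hb, sq, sq]


open scoped Classical in
/-- If to each real place `v` of a number field `F` is assigned a `GL_n`-odd involution
`c_v ∈ GL_n(K)` (char `K ≠ 2`), then the sum over real places of the dimension of the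
fixed space of `Ad(c_v)` on `sl_n`, plus `(n² - 1)` times the number of complex places,
is at most `[F:ℚ] · (n(n+1)/2 - 1)`. -/
theorem stmt9 (F : Type*) [Field F] [NumberField F]
    {K : Type*} [Field K] (hK : ringChar K ≠ 2) {n : ℕ} (hn : 1 ≤ n)
    (c : {v : InfinitePlace F // v.IsReal} → Matrix (Fin n) (Fin n) K)
    (hinv : ∀ v, c v * c v = 1)
    (a : {v : InfinitePlace F // v.IsReal} → ℕ)
    (ha : ∀ v, a v = Module.finrank K (LinearMap.ker (c v - 1).mulVecLin))
    (hodd : ∀ v, |(a v : ℤ) - ((n - a v : ℕ) : ℤ)| ≤ 1) :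
    (∑ v : {v : InfinitePlace F // v.IsReal}, Module.finrank K (slCommutant (c v))) +
        (n ^ 2 - 1) * Nat.card {v : InfinitePlace F // v.IsComplex}
      ≤ Module.finrank ℚ F * (n * (n + 1) / 2 - 1) := by
  have heven : 2 ∣ n * (n + 1) := (Nat.even_mul_succ_self n).two_dvd
  have hs : 2 * (n * (n + 1) / 2) = n * (n + 1) := Nat.mul_div_cancel' heven
  have hnn : n * (n + 1) = n ^ 2 + n := by ring
  -- per-place bound
  have key : ∀ v, Module.finrank K (slCommutant (c v)) ≤ n * (n + 1) / 2 - 1 := by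
    intro v
    rcases eq_or_lt_of_le hn with h1 | h2
    · -- n = 1
      have hbot : slCommutant (c v) = ⊥ := by
        rw [Submodule.eq_bot_iff]
        rintro X ⟨-, htr⟩
        have hn1 : n = 1 := h1.symm
        subst hn1
        ext i j
        fin_cases i
        fin_cases j
        simpa [Matrix.trace_fin_one] using htr
      rw [hbot, finrank_bot]
      exact Nat.zero_le _
    · -- n ≥ 2
      have hbound := slCommutant_bound hK (c v) (hinv v)
      have hale : Module.finrank K (LinearMap.ker ((c v) - 1).mulVecLin) ≤ n := by
        have h := Submodule.finrank_le (LinearMap.ker ((c v) - 1).mulVecLin)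
        simpa [Module.finrank_pi] using h
      have hoddv := hodd v
      rw [ha v] at hoddv
      exact le_trans hbound (arith_bound h2 hale hoddv)
  -- sum over real places
  have hsum : (∑ v : {v : InfinitePlace F // v.IsReal},
      Module.finrank K (slCommutant (c v)))
      ≤ Nat.card {v : InfinitePlace F // v.IsReal} * (n * (n + 1) / 2 - 1) := by
    rw [Nat.card_eq_fintype_card, ← Finset.card_univ]
    calc (∑ v : {v : InfinitePlace F // v.IsReal}, Module.finrank K (slCommutant (c v)))
        ≤ ∑ _v : {v : InfinitePlace F // v.IsReal}, (n * (n + 1) / 2 - 1) :=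
          Finset.sum_le_sum fun v _ => key v
      _ = Finset.univ.card * (n * (n + 1) / 2 - 1) := by
          rw [Finset.sum_const, smul_eq_mul]
  -- complex place bound
  have hcx : n ^ 2 - 1 ≤ 2 * (n * (n + 1) / 2 - 1) := by omega
  -- rank relation
  have hrank : Nat.card {v : InfinitePlace F // v.IsReal}
      + 2 * Nat.card {v : InfinitePlace F // v.IsComplex} = Module.finrank ℚ F := by
    have h := NumberField.InfinitePlace.card_add_two_mul_card_eq_rank F
    rw [NumberField.InfinitePlace.nrRealPlaces, NumberField.InfinitePlace.nrComplexPlaces] at h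
    rw [Nat.card_eq_fintype_card, Nat.card_eq_fintype_card]
    convert h using 3
  set r1 := Nat.card {v : InfinitePlace F // v.IsReal}
  set r2 := Nat.card {v : InfinitePlace F // v.IsComplex}
  set M := n * (n + 1) / 2 - 1
  calc (∑ v : {v : InfinitePlace F // v.IsReal}, Module.finrank K (slCommutant (c v)))
      + (n ^ 2 - 1) * r2
      ≤ r1 * M + (2 * M) * r2 := by
        gcongr
    _ = (r1 + 2 * r2) * M := by ring
    _ = Module.finrank ℚ F * M := by rw [hrank]
end
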